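/- Let M be a square matrix over ℂ satisfying M³ = (1/2)M. Then for all real t, exp(-itM) = I - i√2 sin(t/√2) M - 2(1 - cos(t/√2)) M². -/

import Mathlib

open Matrix Kronecker

noncomputable def σ : Fin 4 → Matrix (Fin 2) (Fin 2) ℂ
  | 0 => 1
  | 1 => !![0, 1; 1, 0]
  | 2 => !![0, -Complex.I; Complex.I, 0]
  | 3 => !![1, 0; 0, -1]

/-- rescaled Pauli matrices λⱼ = σⱼ/√2 (λ₀ = I₂/√2) -/
noncomputable def lam (j : Fin 4) : Matrix (Fin 2) (Fin 2) ℂ :=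
  ((Real.sqrt 2 : ℂ))⁻¹ • σ j

/-- structure constants of commutators: (ad_{λⱼ})ₖₗ = cⱼₖˡ, via orthonormality -/
noncomputable def adL (j : Fin 4) : Matrix (Fin 4) (Fin 4) ℂ :=
  Matrix.of fun k l => ((lam j * lam k - lam k * lam j) * lam l).trace

/-- structure constants of anticommutators: (aad_{λⱼ})ₖₗ = sⱼₖˡ -/
noncomputable def aadL (j : Fin 4) : Matrix (Fin 4) (Fin 4) ℂ :=
  Matrix.of fun k l => ((lam j * lam k + lam k * lam j) * lam l).trace

/-- ad_{Λⱼₖ} = (1/2)(ad_{λⱼ} ⊗ aad_{λₖ} + aad_{λⱼ} ⊗ ad_{λₖ}) -/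
noncomputable def adLL (j k : Fin 4) : Matrix (Fin 4 × Fin 4) (Fin 4 × Fin 4) ℂ :=
  ((2 : ℂ))⁻¹ • (adL j ⊗ₖ aadL k + aadL j ⊗ₖ adL k)
open NormedSpace

attribute [local instance] Matrix.linftyOpNormedRing Matrix.linftyOpNormedAlgebra

lemma exp_smul_idem {n : ℕ} (P : Matrix (Fin n) (Fin n) ℂ) (hP : P * P = P) (x : ℂ) :
    exp (x • P) = 1 + (Complex.exp x - 1) • P := by
  have hPpow : ∀ k : ℕ, P ^ (k + 1) = P := by
    intro k; induction k with
    | zero => simp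
    | succ k ih => rw [pow_succ, ih, hP]
  have h1 : exp (x • P) = ∑' k : ℕ, ((Nat.factorial k : ℂ))⁻¹ • (x • P) ^ k := by
    rw [exp_eq_tsum ℂ]
  rw [h1]
  have hs : Summable fun k : ℕ => ((Nat.factorial k : ℂ))⁻¹ • (x • P) ^ k :=
    expSeries_summable' (𝕂 := ℂ) (x • P)
  rw [Summable.tsum_eq_zero_add hs]
  simp only [pow_zero, smul_pow, hPpow, smul_smul]
  have hx : Complex.exp x - 1 = ∑' k : ℕ, ((Nat.factorial (k+1) : ℂ))⁻¹ * x ^ (k + 1) := by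
    have := (expSeries_summable' (𝕂 := ℂ) (𝔸 := ℂ) x)
    have he : Complex.exp x = ∑' k : ℕ, ((Nat.factorial k : ℂ))⁻¹ • x ^ k := by
      rw [Complex.exp_eq_exp_ℂ, exp_eq_tsum ℂ]
    rw [he, Summable.tsum_eq_zero_add this]
    simp [smul_eq_mul]
  rw [hx, ← Summable.tsum_smul_const]
  · simp [Nat.factorial_succ, mul_comm]
  · have := (expSeries_summable' (𝕂 := ℂ) (𝔸 := ℂ) x)
    exact (this.comp_injective (add_left_injective 1)).congr (by simp [smul_eq_mul])


theorem stmt14 {n : ℕ} (M : Matrix (Fin n) (Fin n) ℂ) (hM : M ^ 3 = ((2 : ℂ))⁻¹ • M)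
    (t : ℝ) :
    NormedSpace.exp ((-(Complex.I * t)) • M) =
      1 - (Complex.I * Real.sqrt 2 * Real.sin (t / Real.sqrt 2)) • M
        - ((2 : ℂ) * ((1 - Real.cos (t / Real.sqrt 2) : ℝ) : ℂ)) • M ^ 2 := by
  have hs2 : ((Real.sqrt 2 : ℝ) : ℂ) * ((Real.sqrt 2 : ℝ) : ℂ) = 2 := by
    rw [← Complex.ofReal_mul, Real.mul_self_sqrt (by norm_num)]
    norm_num
  set c : ℂ := (((Real.sqrt 2 : ℝ) : ℂ))⁻¹ with hc
  have hcne : ((Real.sqrt 2 : ℝ) : ℂ) ≠ 0 := by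
    intro h; rw [h] at hs2; simp at hs2
  have hc2 : c * c = 2⁻¹ := by
    rw [hc, ← mul_inv, hs2]
  have hM4 : M ^ 4 = (2 : ℂ)⁻¹ • M ^ 2 := by
    have : M ^ 4 = M ^ 3 * M := pow_succ M 3
    rw [this, hM, Matrix.smul_mul, ← pow_two]
  set P : Matrix (Fin n) (Fin n) ℂ := M ^ 2 + c • M with hPdef
  set Q : Matrix (Fin n) (Fin n) ℂ := M ^ 2 - c • M with hQdef
  have hmm : M * M = M ^ 2 := (pow_two M).symm
  have hm2m : M ^ 2 * M = M ^ 3 := (pow_succ M 2).symm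
  have hmm2 : M * M ^ 2 = M ^ 3 := (pow_succ' M 2).symm
  have hm2m2 : M ^ 2 * M ^ 2 = M ^ 4 := (pow_add M 2 2).symm
  have hPP : P * P = P := by
    simp only [hPdef, add_mul, mul_add, Matrix.smul_mul, Matrix.mul_smul, smul_smul,
      hmm, hm2m, hmm2, hm2m2, hM4, hM, hc2]
    module
  have hQQ : Q * Q = Q := by
    simp only [hQdef, sub_mul, mul_sub, Matrix.smul_mul, Matrix.mul_smul, smul_smul,
      hmm, hm2m, hmm2, hm2m2, hM4, hM, hc2]
    module
  have hPQ : P * Q = 0 := by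
    simp only [hPdef, hQdef, add_mul, mul_sub, Matrix.smul_mul, Matrix.mul_smul, smul_smul,
      hmm, hm2m, hmm2, hm2m2, hM4, hM, hc2]
    module
  have hQP : Q * P = 0 := by
    simp only [hPdef, hQdef, sub_mul, mul_add, Matrix.smul_mul, Matrix.mul_smul, smul_smul,
      hmm, hm2m, hmm2, hm2m2, hM4, hM, hc2]
    module
  set x : ℂ := -(Complex.I * t) with hx
  have key : (x * c) • P + (-(x * c)) • Q = x • M := by
    have h1 : (x * c) • P + (-(x * c)) • Q = (x * (c * c) * 2) • M := by
      simp only [hPdef, hQdef, smul_add, smul_sub, smul_smul]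
      module
    rw [h1, hc2]
    congr 1
    ring
  rw [← key, Matrix.exp_add_of_commute, exp_smul_idem P hPP, exp_smul_idem Q hQQ]
  · set θ : ℝ := t / Real.sqrt 2 with hθ
    have hxc : x * c = (-θ : ℝ) * Complex.I := by
      rw [hx, hc, hθ]
      push_cast
      field_simp
    have hea : Complex.exp (x * c) = Complex.cos θ - Complex.sin θ * Complex.I := by
      rw [hxc, Complex.exp_mul_I]
      push_cast
      simp [Complex.cos_neg, Complex.sin_neg]
      ring
    have heb : Complex.exp (-(x * c)) = Complex.cos θ + Complex.sin θ * Complex.I := by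
      rw [hxc, ← neg_mul, Complex.exp_mul_I]
      push_cast
      simp
    rw [hea, heb]
    have hexp : (1 + (Complex.cos θ - Complex.sin θ * Complex.I - 1) • P) *
        (1 + (Complex.cos θ + Complex.sin θ * Complex.I - 1) • Q) =
        1 + (Complex.cos θ - Complex.sin θ * Complex.I - 1) • P
          + (Complex.cos θ + Complex.sin θ * Complex.I - 1) • Q := by
      simp only [mul_add, add_mul, one_mul, mul_one, Matrix.smul_mul, Matrix.mul_smul,
        smul_smul, hPQ, smul_zero]
      abel
    rw [hexp, hPdef, hQdef, ← Complex.ofReal_sin, ← Complex.ofReal_cos]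
    match_scalars
    · rfl
    · ring
    · rw [hc]
      field_simp
      linear_combination (Complex.sin θ * Complex.I) * hs2
  · exact Commute.smul_left (Commute.smul_right (hPQ.trans hQP.symm) _) _
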